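/- arXiv:1405.6509 — 9 statements merged into one kernel-verified Lean document; each statement's English description precedes it below -/
import Mathlib

section
/- The argument-wise plurality rule M satisfies Strong Systematicity: for any two profiles L, L' for which M is defined, any arguments a, b, and any permutation ρ of the label set {in, out, undec}, if L_i(a) = ρ(L'_i(b)) for all agents i, then [M(L)](a) = ρ([M(L')](b)). -/
inductive Label : Type
  | inn | out | undec
  deriving DecidableEq

def Complete {A : Type} (att : A → A → Prop) (L : A → Label) : Prop :=
  (∀ a, L a = Label.inn → ∀ b, att b a → L b = Label.out) ∧
  (∀ a, L a = Label.out → ∃ b, att b a ∧ L b = Label.inn) ∧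
  (∀ a, L a = Label.undec →
    (∃ b, att b a ∧ L b = Label.undec) ∧ ¬ ∃ b, att b a ∧ L b = Label.inn)

/-- Number of agents labelling argument `a` with label `l` in profile `P`. -/
def count {A : Type} {n : ℕ} (P : Fin n → A → Label) (a : A) (l : Label) : ℕ :=
  (Finset.univ.filter fun i => P i a = l).card

/-- `l` is the strict plurality winner for argument `a` in profile `P`. -/
def IsPlu {A : Type} {n : ℕ} (P : Fin n → A → Label) (a : A) (l : Label) : Prop :=
  ∀ l', l' ≠ l → count P a l' < count P a l

/-- The argument-wise plurality rule is defined on `P` (no ties). -/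
def PluDefined {A : Type} {n : ℕ} (P : Fin n → A → Label) : Prop :=
  ∀ a, ∃ l, IsPlu P a l

def InSync {A : Type} (att : A → A → Prop) (a b : A) : Prop :=
  (∀ L, Complete att L → L a = L b) ∨
  (∀ L, Complete att L →
    ((L a = Label.inn ↔ L b = Label.out) ∧ (L a = Label.out ↔ L b = Label.inn)))

/-- the argument-wise plurality rule satisfies Strong Systematicity. -/
theorem stmt3 {A : Type} [Fintype A] {n : ℕ}
    (P P' : Fin n → A → Label) (hdef : PluDefined P) (hdef' : PluDefined P')
    (a b : A) (ρ : Equiv.Perm Label)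
    (h : ∀ i, P i a = ρ (P' i b))
    (l l' : Label) (hl : IsPlu P a l) (hl' : IsPlu P' b l') :
    l = ρ l' := by
  have hcount : ∀ m : Label, count P a (ρ m) = count P' b m := by
    intro m
    unfold count
    congr 1
    ext i
    simp only [Finset.mem_filter, h i, EmbeddingLike.apply_eq_iff_eq]
  by_contra hne
  have h1 := hl (ρ l') (by intro he; exact hne he.symm)
  have h2 := hl' (ρ.symm l) (by intro he; apply hne; rw [← he]; simp)
  rw [hcount l'] at h1
  have : count P a l = count P a (ρ (ρ.symm l)) := by simp
  rw [this, hcount (ρ.symm l)] at h1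
  exact absurd h1 (Nat.not_lt.mpr (Nat.le_of_lt h2))
end

section
/- Suppose AF is an argumentation framework containing an argument a that admits complete labellings assigning a each of the three labels in, out, undec (i.e., there exist complete labellings L_in, L_out, L_undec with L_in(a)=in, L_out(a)=out, L_undec(a)=undec). Then for any number of agents n divisible by 3, there exists no aggregation operator F defined on all profiles of complete labellings (Universal Domain) that satisfies both Anonymity and Strong Systematicity. -/
/-- if some argument `a` can feasibly take all three labels in complete
labellings, then for `n` divisible by 3 there is no aggregation operator on all
profiles of complete labellings satisfying Anonymity and Strong Systematicity. -/
theorem stmt5 {A : Type} [Fintype A] (att : A → A → Prop) (a : A) {n : ℕ}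
    (hin : ∃ L, Complete att L ∧ L a = Label.inn)
    (hout : ∃ L, Complete att L ∧ L a = Label.out)
    (hund : ∃ L, Complete att L ∧ L a = Label.undec)
    (hdiv : 3 ∣ n) :
    ¬ ∃ F : (Fin n → {L : A → Label // Complete att L}) → A → Label,
      -- Anonymity
      (∀ (P : Fin n → {L : A → Label // Complete att L}) (ρ : Equiv.Perm (Fin n)),
        F (fun i => P (ρ i)) = F P) ∧
      -- Strong Systematicity
      (∀ (P P' : Fin n → {L : A → Label // Complete att L}) (x y : A)
          (ρ : Equiv.Perm Label),
        (∀ i, (P i).1 x = ρ ((P' i).1 y)) → F P x = ρ (F P' y)) := by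
  classical
  obtain ⟨Li, hLi, hia⟩ := hin
  obtain ⟨Lo, hLo, hoa⟩ := hout
  obtain ⟨Lu, hLu, hua⟩ := hund
  rintro ⟨F, hanon, hsys⟩
  obtain ⟨m, rfl⟩ := hdiv
  set rot : Equiv.Perm Label :=
    { toFun := fun l => match l with | .inn => .out | .out => .undec | .undec => .inn
      invFun := fun l => match l with | .inn => .undec | .out => .inn | .undec => .out
      left_inv := by intro l; cases l <;> rfl
      right_inv := by intro l; cases l <;> rfl } with hrot
  set P : Fin (3*m) → {L : A → Label // Complete att L} := fun i =>
    if (i : ℕ) < m then ⟨Li, hLi⟩ else if (i : ℕ) < 2*m then ⟨Lo, hLo⟩ else ⟨Lu, hLu⟩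
    with hP
  rcases Nat.eq_zero_or_pos m with hm | hm
  · subst hm
    have h1 := hsys P P a a rot (fun i => absurd i.isLt (by omega))
    cases h : F P a <;> rw [h] at h1 <;> simp [hrot, Equiv.coe_fn_mk] at h1
  · haveI : NeZero (3*m) := ⟨by omega⟩
    set c : Fin (3*m) := ⟨m, by omega⟩ with hc
    set σ : Equiv.Perm (Fin (3*m)) := Equiv.addRight c with hσ
    have key : ∀ i, (P (σ i)).1 a = rot ((P i).1 a) := by
      intro i
      have hi := i.isLt
      have hval : ((σ i : Fin (3*m)) : ℕ) = ((i : ℕ) + m) % (3*m) := by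
        simp [hσ, hc, Fin.add_def]
      rcases lt_or_ge (i : ℕ) m with h1 | h1
      · have hv : ((σ i : Fin (3*m)) : ℕ) = (i : ℕ) + m := by
          rw [hval, Nat.mod_eq_of_lt (by omega)]
        simp only [hP]
        rw [hv, if_pos h1, if_neg (by omega), if_pos (by omega)]
        simp [hia, hoa, hrot]
      · rcases lt_or_ge (i : ℕ) (2*m) with h2 | h2
        · have hv : ((σ i : Fin (3*m)) : ℕ) = (i : ℕ) + m := by
            rw [hval, Nat.mod_eq_of_lt (by omega)]
          simp only [hP]
          rw [hv, if_neg (by omega), if_pos h2, if_neg (by omega), if_neg (by omega)]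
          simp [hoa, hua, hrot]
        · have hv : ((σ i : Fin (3*m)) : ℕ) = (i : ℕ) + m - 3*m := by
            rw [hval, Nat.mod_eq_sub_mod (by omega), Nat.mod_eq_of_lt (by omega)]
          simp only [hP]
          rw [hv, if_pos (by omega), if_neg (by omega : ¬ (i:ℕ) < m), if_neg (by omega : ¬ (i:ℕ) < 2*m)]
          simp [hua, hia, hrot]
    have h1 := hsys (fun i => P (σ i)) P a a rot key
    rw [hanon P σ] at h1
    cases h : F P a <;> rw [h] at h1 <;> simp [hrot, Equiv.coe_fn_mk] at h1
end

section
/- Suppose AF is an argumentation framework containing an argument a whose complete labellings assign it only the labels out and undec, with both occurring (i.e., there exist complete labellings L_out, L_undec with L_out(a)=out and L_undec(a)=undec, and no complete labelling assigns a the label in). Then for any even number of agents n, there exists no aggregation operator satisfying Universal Domain, Anonymity, Strong Systematicity, and Collective Rationality. -/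
/-- if some argument `a` can feasibly take exactly the labels `out` and
`undec` in complete labellings, then for even `n` there is no aggregation operator
satisfying Universal Domain, Anonymity, Strong Systematicity and Collective
Rationality. -/
theorem stmt6 {A : Type} [Fintype A] (att : A → A → Prop) (a : A) {n : ℕ}
    (hout : ∃ L, Complete att L ∧ L a = Label.out)
    (hund : ∃ L, Complete att L ∧ L a = Label.undec)
    (hnoin : ∀ L, Complete att L → L a ≠ Label.inn)
    (hn : Even n) :
    ¬ ∃ F : (Fin n → {L : A → Label // Complete att L}) → A → Label,
      -- Anonymity
      (∀ (P : Fin n → {L : A → Label // Complete att L}) (ρ : Equiv.Perm (Fin n)),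
        F (fun i => P (ρ i)) = F P) ∧
      -- Strong Systematicity
      (∀ (P P' : Fin n → {L : A → Label // Complete att L}) (x y : A)
          (ρ : Equiv.Perm Label),
        (∀ i, (P i).1 x = ρ ((P' i).1 y)) → F P x = ρ (F P' y)) ∧
      -- Collective Rationality
      (∀ P : Fin n → {L : A → Label // Complete att L}, Complete att (F P)) := by

  rintro ⟨F, hanon, hsys, hcr⟩
  obtain ⟨Lo, hLo, hLoa⟩ := hout
  obtain ⟨Lu, hLu, hLua⟩ := hund
  obtain ⟨m, hm⟩ := hn
  subst hm
  have hσou : (Equiv.swap Label.out Label.undec) Label.out = Label.undec :=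
    Equiv.swap_apply_left _ _
  have hσuo : (Equiv.swap Label.out Label.undec) Label.undec = Label.out :=
    Equiv.swap_apply_right _ _
  have hσi : (Equiv.swap Label.out Label.undec) Label.inn = Label.inn := by
    apply Equiv.swap_apply_of_ne_of_ne <;> simp
  rcases Nat.eq_zero_or_pos m with hm0 | hm0
  · subst hm0
    have P : Fin (0+0) → {L : A → Label // Complete att L} := fun i => i.elim0
    have h1 : F P a = (Equiv.swap Label.out Label.undec) (F P a) :=
      hsys P P a a _ (fun i => i.elim0)
    have hne := hnoin (F P) (hcr P)
    rcases h : F P a with _ | _ | _ <;> rw [h] at h1 hne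
    · exact hne rfl
    · rw [hσou] at h1; exact Label.noConfusion h1
    · rw [hσuo] at h1; exact Label.noConfusion h1
  · have key : ∀ i : Fin (m+m), (if (i:ℕ) < m then (i:ℕ)+m else (i:ℕ)-m) < m+m := by
      intro i; have := i.isLt; split <;> omega
    set g : Fin (m+m) → Fin (m+m) := fun i => ⟨_, key i⟩ with hg
    have hinv : Function.Involutive g := by
      intro i; have := i.isLt
      apply Fin.ext
      simp only [hg]
      split_ifs <;> omega
    set P : Fin (m+m) → {L : A → Label // Complete att L} :=
      fun i => if (i:ℕ) < m then ⟨Lo, hLo⟩ else ⟨Lu, hLu⟩ with hP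
    set P' : Fin (m+m) → {L : A → Label // Complete att L} :=
      fun i => if (i:ℕ) < m then ⟨Lu, hLu⟩ else ⟨Lo, hLo⟩ with hP'
    have hperm : (fun i => P (hinv.toPerm g i)) = P' := by
      funext i
      have hi := i.isLt
      show P (g i) = P' i
      simp only [hP, hP', hg]
      split_ifs <;> first | rfl | omega
    have hFP' : F P' = F P := by rw [← hperm]; exact hanon P (hinv.toPerm g)
    have hsys' : F P a = (Equiv.swap Label.out Label.undec) (F P' a) := by
      apply hsys
      intro i
      simp only [hP, hP']
      rcases Nat.lt_or_ge (i:ℕ) m with h | h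
      · rw [if_pos h, if_pos h]
        show Lo a = (Equiv.swap Label.out Label.undec) (Lu a)
        rw [hLoa, hLua, hσuo]
      · rw [if_neg (by omega), if_neg (by omega)]
        show Lu a = (Equiv.swap Label.out Label.undec) (Lo a)
        rw [hLoa, hLua, hσou]
    rw [hFP'] at hsys'
    have hne := hnoin (F P) (hcr P)
    rcases h : F P a with _ | _ | _ <;> rw [h] at hsys' hne
    · exact hne rfl
    · rw [hσou] at hsys'; exact Label.noConfusion hsys'
    · rw [hσuo] at hsys'; exact Label.noConfusion hsys'
end

section
/- Consider the argumentation framework with arguments {a, b, c} and defeats a→b, b→a, a→c, b→c. For any even number of agents n ≥ 2, there exists no aggregation operator F satisfying Universal Domain, Weak Systematicity, Anonymity, Collective Rationality, and Unanimity. -/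
inductive Arg : Type
  | a | b | c
  deriving DecidableEq

instance : Fintype Arg := ⟨⟨{Arg.a, Arg.b, Arg.c}, by decide⟩, by intro x; cases x <;> decide⟩

/-- Defeats: a→b, b→a, a→c, b→c. -/
def att7 : Arg → Arg → Prop := fun x y =>
  (x = Arg.a ∧ y = Arg.b) ∨ (x = Arg.b ∧ y = Arg.a) ∨
  (x = Arg.a ∧ y = Arg.c) ∨ (x = Arg.b ∧ y = Arg.c)

instance att7.dec : ∀ x y, Decidable (att7 x y) := fun x y => by
  unfold att7; infer_instance

def L1 : Arg → Label := fun x => match x with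
  | Arg.a => Label.inn | _ => Label.out

def L2 : Arg → Label := fun x => match x with
  | Arg.b => Label.inn | _ => Label.out

lemma L1_complete : Complete att7 L1 := by unfold Complete; decide

lemma L2_complete : Complete att7 L2 := by unfold Complete; decide

/-- for the framework {a,b,c} with a↔b and a,b→c and any even n ≥ 2,
no aggregation operator satisfies Universal Domain, Weak Systematicity, Anonymity,
Collective Rationality, and Unanimity. -/
theorem stmt7 {n : ℕ} (hn : Even n) (hn2 : 2 ≤ n) :
    ¬ ∃ F : (Fin n → {L : Arg → Label // Complete att7 L}) → Arg → Label,
      -- Weak Systematicity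
      (∀ (P P' : Fin n → {L : Arg → Label // Complete att7 L}) (x y : Arg),
        (∀ i, (P i).1 x = (P' i).1 y) → F P x = F P' y) ∧
      -- Anonymity
      (∀ (P : Fin n → {L : Arg → Label // Complete att7 L}) (ρ : Equiv.Perm (Fin n)),
        F (fun i => P (ρ i)) = F P) ∧
      -- Collective Rationality
      (∀ P : Fin n → {L : Arg → Label // Complete att7 L}, Complete att7 (F P)) ∧
      -- Unanimity
      (∀ L : {L : Arg → Label // Complete att7 L}, F (fun _ => L) = L.1) := by
  rintro ⟨F, hsys, hanon, hrat, hunan⟩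
  obtain ⟨m, rfl⟩ := hn
  have hm : 1 ≤ m := by omega
  set A1 : {L : Arg → Label // Complete att7 L} := ⟨L1, L1_complete⟩ with hA1
  set A2 : {L : Arg → Label // Complete att7 L} := ⟨L2, L2_complete⟩ with hA2
  set P : Fin (m + m) → {L : Arg → Label // Complete att7 L} :=
    fun i => if i.val < m then A1 else A2 with hP
  set f : Fin (m + m) → Fin (m + m) :=
    fun i => if h : i.val < m then ⟨i.val + m, by omega⟩ else ⟨i.val - m, by omega⟩ with hf
  have hinv : Function.Involutive f := by
    intro i
    by_cases h : i.val < m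
    · have : f i = ⟨i.val + m, by omega⟩ := by simp [hf, h]
      rw [this]
      have h2 : ¬ (i.val + m < m) := by omega
      simp [hf, h2]
    · have : f i = ⟨i.val - m, by omega⟩ := by simp [hf, h]
      rw [this]
      have h2 : i.val - m < m := by omega
      simp only [hf, h2, dif_pos]
      apply Fin.ext
      simp
      omega
  let ρ : Equiv.Perm (Fin (m + m)) := ⟨f, f, hinv.leftInverse, hinv.rightInverse⟩
  have hswap : ∀ i, (P (ρ i)).1 Arg.a = (P i).1 Arg.b := by
    intro i
    by_cases h : i.val < m
    · have h1 : ρ i = ⟨i.val + m, by omega⟩ := by simp [ρ, hf, h]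
      have h2 : ¬ (i.val + m < m) := by omega
      simp [h1, hP, h, h2, hA1, hA2, L1, L2]
    · have h1 : ρ i = ⟨i.val - m, by omega⟩ := by simp [ρ, hf, h]
      have h2 : i.val - m < m := by omega
      simp [h1, hP, h, h2, hA1, hA2, L1, L2]
  have hab : F P Arg.a = F P Arg.b := by
    have h1 := hsys (fun i => P (ρ i)) P Arg.a Arg.b hswap
    rw [hanon P ρ] at h1
    exact h1
  have hc : F P Arg.c = Label.out := by
    have h1 : ∀ i, (P i).1 Arg.c = ((fun _ : Fin (m + m) => A1) i).1 Arg.c := by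
      intro i
      by_cases h : i.val < m <;> simp [hP, h, hA1, hA2, L1, L2]
    have h2 := hsys P (fun _ => A1) Arg.c Arg.c h1
    rw [hunan A1] at h2
    exact h2
  obtain ⟨h1, h2, h3⟩ := hrat P
  have hba : att7 Arg.b Arg.a := by unfold att7; tauto
  cases ha : F P Arg.a with
  | inn =>
    have := h1 Arg.a ha Arg.b hba
    rw [hab] at ha
    rw [this] at ha
    exact absurd ha (by decide)
  | out =>
    obtain ⟨b', hatt, hinn⟩ := h2 Arg.a ha
    have hb' : b' = Arg.b := by
      rcases hatt with ⟨_, h⟩ | ⟨h, _⟩ | ⟨_, h⟩ | ⟨_, h⟩ <;> first | exact h | exact absurd h (by decide)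
    rw [hb'] at hinn
    rw [hab, hinn] at ha
    exact absurd ha (by decide)
  | undec =>
    have hb : F P Arg.b = Label.undec := by rw [← hab, ha]
    obtain ⟨b', hatt, hinn⟩ := h2 Arg.c hc
    rcases hatt with ⟨h, h'⟩ | ⟨h, h'⟩ | ⟨h, _⟩ | ⟨h, _⟩
    · exact absurd h' (by decide)
    · exact absurd h' (by decide)
    · rw [h, ha] at hinn; exact absurd hinn (by decide)
    · rw [h, hb] at hinn; exact absurd hinn (by decide)
end

section
/- The argument-wise plurality rule satisfies IN-CR1 on profiles of complete labellings: given a profile L = (L_1,...,L_n) of complete labellings for which M(L) is defined, if [M(L)](a) = in for some argument a, then there is no argument b with b → a and [M(L)](b) = in. -/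
/-- on profiles of complete labellings, the argument-wise plurality rule
satisfies IN-CR1: a collectively accepted argument has no collectively accepted
defeater. -/
theorem stmt10 {A : Type} [Fintype A] {n : ℕ} (att : A → A → Prop)
    (P : Fin n → A → Label) (hcomp : ∀ i, Complete att (P i))
    (hdef : PluDefined P)
    (a : A) (ha : IsPlu P a Label.inn) :
    ¬ ∃ b, att b a ∧ IsPlu P b Label.inn := by
  rintro ⟨b, hba, hb⟩
  -- agents with P i a = inn label b out
  have h1 : count P a Label.inn ≤ count P b Label.out := by
    apply Finset.card_le_card
    intro i hi
    simp only [Finset.mem_filter, Finset.mem_univ, true_and] at *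
    exact (hcomp i).1 a hi b hba
  -- agents with P i b = inn label a out
  have h2 : count P b Label.inn ≤ count P a Label.out := by
    apply Finset.card_le_card
    intro i hi
    simp only [Finset.mem_filter, Finset.mem_univ, true_and] at *
    cases h : P i a with
    | inn => exact absurd ((hcomp i).1 a h b hba) (by rw [hi]; simp)
    | out => rfl
    | undec => exact absurd ⟨b, hba, hi⟩ ((hcomp i).2.2 a h).2
  have c1 := ha Label.out (by simp)
  have c2 := hb Label.out (by simp)
  omega
end

section
/- Let AF be an argumentation framework and a an argument such that every defeater b of a is in-sync with a (a ≡ b). Then for any profile of complete labellings on which the argument-wise plurality rule M is defined, the collective labelling of a is legal: if [M(L)](a) = out then some defeater of a is collectively in; if [M(L)](a) = in then all defeaters of a are collectively out; if [M(L)](a) = undec then some defeater of a is collectively undec and no defeater is collectively in. -/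
def lflip : Label → Label
  | Label.inn => Label.out
  | Label.out => Label.inn
  | Label.undec => Label.undec

lemma lflip_invol : ∀ l, lflip (lflip l) = l := by
  intro l; cases l <;> rfl

lemma count_comp {A : Type} {n : ℕ} (P : Fin n → A → Label) (a b : A)
    (f : Label → Label) (hf : ∀ l, f (f l) = l)
    (hb : ∀ i, P i b = f (P i a)) (l : Label) :
    count P b l = count P a (f l) := by
  unfold count
  congr 1
  apply Finset.filter_congr
  intro i _
  rw [hb i]
  constructor
  · intro h; rw [← h, hf]
  · intro h; rw [h, hf]

lemma isplu_comp {A : Type} {n : ℕ} (P : Fin n → A → Label) (a b : A)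
    (f : Label → Label) (hf : ∀ l, f (f l) = l)
    (hb : ∀ i, P i b = f (P i a)) (l : Label) :
    IsPlu P b l ↔ IsPlu P a (f l) := by
  constructor
  · intro h m hm
    have h1 : count P b (f m) < count P b l := by
      apply h
      intro he
      apply hm
      rw [← he, hf]
    rw [count_comp P a b f hf hb, count_comp P a b f hf hb, hf] at h1
    exact h1
  · intro h m hm
    rw [count_comp P a b f hf hb, count_comp P a b f hf hb]
    apply h
    intro he
    apply hm
    have := congrArg f he
    rwa [hf, hf] at this

lemma isplu_unique {A : Type} {n : ℕ} (P : Fin n → A → Label) (a : A) (l l' : Label)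
    (h : IsPlu P a l) (h' : IsPlu P a l') : l = l' := by
  by_contra hne
  exact lt_irrefl _ (lt_trans (h l' (Ne.symm hne)) (h' l hne))

lemma isplu_exists {A : Type} {n : ℕ} (P : Fin n → A → Label) (a : A) (l : Label)
    (h : IsPlu P a l) : ∃ i, P i a = l := by
  obtain ⟨l', hl'⟩ : ∃ l', l' ≠ l := by
    cases l
    · exact ⟨Label.out, by simp⟩
    · exact ⟨Label.inn, by simp⟩
    · exact ⟨Label.inn, by simp⟩
  have := h l' hl'
  have hpos : 0 < count P a l := Nat.lt_of_le_of_lt (Nat.zero_le _) this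
  rw [count, Finset.card_pos] at hpos
  obtain ⟨i, hi⟩ := hpos
  simp only [Finset.mem_filter] at hi
  exact ⟨i, hi.2⟩

/-- if every defeater of `a` is in-sync with `a`, the argument-wise
plurality rule always produces a legal collective labelling at `a`. -/
theorem stmt14 {A : Type} [Fintype A] {n : ℕ} (att : A → A → Prop) (a : A)
    (hsync : ∀ b, att b a → InSync att a b)
    (P : Fin n → A → Label) (hcomp : ∀ i, Complete att (P i))
    (hdef : PluDefined P) :
    (IsPlu P a Label.out → ∃ b, att b a ∧ IsPlu P b Label.inn) ∧
    (IsPlu P a Label.inn → ∀ b, att b a → IsPlu P b Label.out) ∧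
    (IsPlu P a Label.undec →
      (∃ b, att b a ∧ IsPlu P b Label.undec) ∧
      ¬ ∃ b, att b a ∧ IsPlu P b Label.inn) := by
  -- for each defeater b, there is an involutive f with P i b = f (P i a)
  have key : ∀ b, att b a → ∃ f : Label → Label,
      (∀ l, f (f l) = l) ∧ ∀ i, P i b = f (P i a) := by
    intro b hb
    rcases hsync b hb with h | h
    · exact ⟨id, fun _ => rfl, fun i => (h (P i) (hcomp i)).symm⟩
    · refine ⟨lflip, lflip_invol, fun i => ?_⟩
      have hi := h (P i) (hcomp i)
      cases ha : P i a
      · exact hi.1.mp ha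
      · exact hi.2.mp ha
      · cases hbv : P i b
        · exact absurd (hi.2.mpr hbv) (by rw [ha]; simp)
        · exact absurd (hi.1.mpr hbv) (by rw [ha]; simp)
        · rfl
  refine ⟨?_, ?_, ?_⟩
  · -- out case
    intro hplu
    obtain ⟨i, hi⟩ := isplu_exists P a Label.out hplu
    obtain ⟨b, hb, hbi⟩ := (hcomp i).2.1 a hi
    obtain ⟨f, hf, hfb⟩ := key b hb
    have hfo : f Label.out = Label.inn := by rw [← hi, ← hfb i, hbi]
    refine ⟨b, hb, ?_⟩
    rw [isplu_comp P a b f hf hfb]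
    have : f Label.inn = Label.out := by rw [← hfo, hf]
    rw [this]; exact hplu
  · -- in case
    intro hplu b hb
    obtain ⟨i, hi⟩ := isplu_exists P a Label.inn hplu
    have hbi : P i b = Label.out := (hcomp i).1 a hi b hb
    obtain ⟨f, hf, hfb⟩ := key b hb
    have hfi : f Label.inn = Label.out := by rw [← hi, ← hfb i, hbi]
    rw [isplu_comp P a b f hf hfb]
    have : f Label.out = Label.inn := by rw [← hfi, hf]
    rw [this]; exact hplu
  · -- undec case
    intro hplu
    constructor
    · obtain ⟨i, hi⟩ := isplu_exists P a Label.undec hplu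
      obtain ⟨⟨b, hb, hbi⟩, _⟩ := (hcomp i).2.2 a hi
      obtain ⟨f, hf, hfb⟩ := key b hb
      have hfu : f Label.undec = Label.undec := by
        have h := hfb i; rw [hi, hbi] at h; exact h.symm
      refine ⟨b, hb, ?_⟩
      rw [isplu_comp P a b f hf hfb, hfu]
      exact hplu
    · rintro ⟨b, hb, hbplu⟩
      obtain ⟨f, hf, hfb⟩ := key b hb
      rw [isplu_comp P a b f hf hfb] at hbplu
      have := isplu_unique P a _ _ hbplu hplu
      -- f inn = undec impossible since then f undec = inn contradicts... rather:
      -- from f inn = undec, applying invol: f undec = inn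
      obtain ⟨i, hi⟩ := isplu_exists P a Label.undec hplu
      have hfu : f Label.undec = Label.inn := by rw [← this, hf]
      have hbi : P i b = Label.inn := by rw [hfb i, hi, hfu]
      have := ((hcomp i).2.2 a hi).2
      exact this ⟨b, hb, hbi⟩
end

section
/- Let AF = (A, →) be an argumentation framework that is partitioned into disconnected components each of which forms an issue (an equivalence class of the in-sync relation). Then the argument-wise plurality rule produces a complete labelling on every profile of complete labellings for which it is defined (Collective Rationality). -/
def labFlip : Label → Label
  | Label.inn => Label.out
  | Label.out => Label.inn
  | Label.undec => Label.undec

lemma labFlip_flip : ∀ l, labFlip (labFlip l) = l := by intro l; cases l <;> rfl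

lemma plu_unique {A : Type} {n : ℕ} {P : Fin n → A → Label} {a : A} {l l' : Label}
    (h : IsPlu P a l) (h' : IsPlu P a l') : l = l' := by
  by_contra hne
  exact absurd (h l' (fun he => hne he.symm)) (not_lt.2 (le_of_lt (h' l hne)))

lemma plu_pos {A : Type} {n : ℕ} {P : Fin n → A → Label} {a : A} {l : Label}
    (h : IsPlu P a l) : 0 < count P a l := by
  obtain ⟨l', hl'⟩ : ∃ l', l' ≠ l := by
    cases l
    · exact ⟨Label.out, by decide⟩
    · exact ⟨Label.inn, by decide⟩
    · exact ⟨Label.inn, by decide⟩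
  exact lt_of_le_of_lt (Nat.zero_le _) (h l' hl')

lemma count_congr {A : Type} {n : ℕ} (P : Fin n → A → Label) (a b : A) (f : Label → Label)
    (h : ∀ i l, P i a = l ↔ P i b = f l) : ∀ l, count P a l = count P b (f l) := by
  intro l
  unfold count
  congr 1
  ext i
  simp only [Finset.mem_filter, Finset.mem_univ, true_and]
  exact h i l

lemma plu_transfer {A : Type} {n : ℕ} {P : Fin n → A → Label} {a b : A} {f : Label → Label}
    (hf : ∀ l, f (f l) = l)
    (hc : ∀ l, count P a l = count P b (f l)) {l : Label} (h : IsPlu P a l) :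
    IsPlu P b (f l) := by
  intro l' hne
  have h1 : f l' ≠ l := by
    intro he
    apply hne
    rw [← he, hf]
  calc count P b l' = count P a (f l') := by rw [hc (f l'), hf]
    _ < count P a l := h _ h1
    _ = count P b (f l) := hc l

lemma sync_iff {A' : Type} {L : A' → Label} {a b : A'}
    (h : (L a = Label.inn ↔ L b = Label.out) ∧ (L a = Label.out ↔ L b = Label.inn)) :
    ∀ l, L a = l ↔ L b = labFlip l := by
  obtain ⟨h1, h2⟩ := h
  intro l
  cases l
  · exact h1
  · exact h2
  · constructor
    · intro ha
      cases hb : L b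
      · exact absurd (h2.mpr hb) (by rw [ha]; decide)
      · exact absurd (h1.mpr hb) (by rw [ha]; decide)
      · rfl
    · intro hb
      cases ha : L a
      · exact absurd (h1.mp ha) (by rw [hb]; decide)
      · exact absurd (h2.mp ha) (by rw [hb]; decide)
      · rfl

lemma count_pos_exists {A : Type} {n : ℕ} {P : Fin n → A → Label} {a : A} {l : Label}
    (h : 0 < count P a l) : ∃ i, P i a = l := by
  obtain ⟨i, hi⟩ := Finset.card_pos.mp h
  exact ⟨i, (Finset.mem_filter.mp hi).2⟩

/-- if the framework consists of disconnected components each forming an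
issue (so every defeater of an argument is in-sync with it), the argument-wise
plurality rule produces a complete labelling on every profile of complete labellings
for which it is defined. -/
theorem stmt15 {A : Type} [Fintype A] {n : ℕ} (att : A → A → Prop)
    (hissues : ∀ a b, att b a → InSync att a b)
    (P : Fin n → A → Label) (hcomp : ∀ i, Complete att (P i))
    (hdef : PluDefined P)
    (Lstar : A → Label) (hLstar : ∀ a, IsPlu P a (Lstar a)) :
    Complete att Lstar := by
  -- In the "same" case of InSync, the winners coincide.
  have hsame : ∀ a b : A, (∀ L, Complete att L → L a = L b) → Lstar b = Lstar a := by
    intro a b hs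
    have hc : ∀ l, count P a l = count P b (id l) :=
      count_congr P a b id (fun i l => by rw [hs (P i) (hcomp i)]; rfl)
    exact plu_unique (hLstar b) (plu_transfer (f := id) (fun l => rfl) hc (hLstar a))
  -- In the "flip" case of InSync, the winner at b is the flip of the winner at a.
  have hflip : ∀ a b : A,
      (∀ L, Complete att L →
        ((L a = Label.inn ↔ L b = Label.out) ∧ (L a = Label.out ↔ L b = Label.inn))) →
      Lstar b = labFlip (Lstar a) := by
    intro a b hs
    have hc : ∀ l, count P a l = count P b (labFlip l) :=
      count_congr P a b labFlip (fun i l => sync_iff (hs (P i) (hcomp i)) l)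
    exact plu_unique (hLstar b) (plu_transfer labFlip_flip hc (hLstar a))
  refine ⟨?_, ?_, ?_⟩
  · -- in-condition
    intro a ha b hab
    rcases hissues a b hab with hs | hs
    · -- same case: contradiction, count of inn at a is 0
      exfalso
      have hzero : count P a Label.inn = 0 := by
        rw [count, Finset.card_eq_zero]
        ext i
        simp only [Finset.mem_filter, Finset.mem_univ, true_and, Finset.notMem_empty,
          iff_false]
        intro hi
        have hbo : P i b = Label.out := (hcomp i).1 a hi b hab
        rw [hs (P i) (hcomp i), hbo] at hi
        exact absurd hi (by decide)
      have := plu_pos (hLstar a)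
      rw [ha] at this
      omega
    · rw [hflip a b hs, ha]; rfl
  · -- out-condition
    intro a ha
    have hpos := plu_pos (hLstar a)
    rw [ha] at hpos
    obtain ⟨i, hi⟩ := count_pos_exists hpos
    obtain ⟨b, hab, hbin⟩ := (hcomp i).2.1 a hi
    refine ⟨b, hab, ?_⟩
    rcases hissues a b hab with hs | hs
    · rw [hs (P i) (hcomp i), hbin] at hi
      exact absurd hi (by decide)
    · rw [hflip a b hs, ha]; rfl
  · -- undec-condition
    intro a ha
    have hund : ∀ b, att b a → Lstar b = Label.undec := by
      intro b hab
      rcases hissues a b hab with hs | hs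
      · rw [hsame a b hs, ha]
      · rw [hflip a b hs, ha]; rfl
    constructor
    · have hpos := plu_pos (hLstar a)
      rw [ha] at hpos
      obtain ⟨i, hi⟩ := count_pos_exists hpos
      obtain ⟨⟨b, hab, _⟩, _⟩ := (hcomp i).2.2 a hi
      exact ⟨b, hab, hund b hab⟩
    · rintro ⟨b, hab, hbin⟩
      rw [hund b hab] at hbin
      exact absurd hbin (by decide)
end

section
/- Let AF be an argumentation framework, and a, b arguments with b → a. Suppose every other defeater c ≠ b of a has justification status {out} (i.e., every complete labelling labels c out). Then a and b are in-sync, and moreover the argument-wise plurality rule always legally collectively labels a: on any profile of complete labellings for which it is defined, the collective label of a together with the collective labels of a's defeaters satisfy the complete-labelling conditions at a. -/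
/-- if `b` defeats `a` and every other defeater `c ≠ b` of `a` has
justification status `{out}`, then `a` and `b` are in-sync and the argument-wise
plurality rule always legally collectively labels `a`. -/
theorem stmt16 {A : Type} [Fintype A] {n : ℕ} (att : A → A → Prop) (a b : A)
    (hab : att b a)
    (hother : ∀ c, c ≠ b → att c a → ∀ L, Complete att L → L c = Label.out) :
    InSync att a b ∧
    (∀ P : Fin n → A → Label, (∀ i, Complete att (P i)) → PluDefined P →
      (IsPlu P a Label.out → ∃ d, att d a ∧ IsPlu P d Label.inn) ∧
      (IsPlu P a Label.inn → ∀ d, att d a → IsPlu P d Label.out) ∧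
      (IsPlu P a Label.undec →
        (∃ d, att d a ∧ IsPlu P d Label.undec) ∧
        ¬ ∃ d, att d a ∧ IsPlu P d Label.inn)) := by

  -- Key pointwise fact about complete labellings
  have key : ∀ L, Complete att L →
      (L a = Label.inn ↔ L b = Label.out) ∧ (L a = Label.out ↔ L b = Label.inn) ∧
      (L a = Label.undec ↔ L b = Label.undec) := by
    intro L hL
    obtain ⟨h1, h2, h3⟩ := hL
    have fin : L a = Label.inn → L b = Label.out := fun h => h1 a h b hab
    have fout : L a = Label.out → L b = Label.inn := by
      intro h
      obtain ⟨c, hc, hcinn⟩ := h2 a h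
      by_cases hcb : c = b
      · rwa [hcb] at hcinn
      · have := hother c hcb hc L ⟨h1, h2, h3⟩
        rw [this] at hcinn; cases hcinn
    have fund : L a = Label.undec → L b = Label.undec := by
      intro h
      obtain ⟨⟨c, hc, hcund⟩, _⟩ := h3 a h
      by_cases hcb : c = b
      · rwa [hcb] at hcund
      · have := hother c hcb hc L ⟨h1, h2, h3⟩
        rw [this] at hcund; cases hcund
    have bout : L b = Label.out → L a = Label.inn := by
      intro h
      rcases ha : L a with _ | _ | _
      · rfl
      · rw [fout ha] at h; cases h
      · rw [fund ha] at h; cases h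
    have binn : L b = Label.inn → L a = Label.out := by
      intro h
      rcases ha : L a with _ | _ | _
      · rw [fin ha] at h; cases h
      · rfl
      · rw [fund ha] at h; cases h
    have bund : L b = Label.undec → L a = Label.undec := by
      intro h
      rcases ha : L a with _ | _ | _
      · rw [fin ha] at h; cases h
      · rw [fout ha] at h; cases h
      · rfl
    exact ⟨⟨fin, bout⟩, ⟨fout, binn⟩, fund, bund⟩
  refine ⟨Or.inr fun L hL => ⟨(key L hL).1, (key L hL).2.1⟩, ?_⟩
  intro P hP _
  have cnt : ∀ (x y : A) (l l' : Label), (∀ i, P i x = l ↔ P i y = l') →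
      count P x l = count P y l' := by
    intro x y l l' h
    unfold count
    congr 1
    exact Finset.filter_congr fun i _ => h i
  have cin : count P a Label.inn = count P b Label.out :=
    cnt a b _ _ fun i => (key _ (hP i)).1
  have cout : count P a Label.out = count P b Label.inn :=
    cnt a b _ _ fun i => (key _ (hP i)).2.1
  have cund : count P a Label.undec = count P b Label.undec :=
    cnt a b _ _ fun i => (key _ (hP i)).2.2
  -- counts for other defeaters
  have cother : ∀ d, d ≠ b → att d a →
      count P d Label.out = n ∧ count P d Label.inn = 0 ∧ count P d Label.undec = 0 := by
    intro d hdb hd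
    have hall : ∀ i, P i d = Label.out := fun i => hother d hdb hd (P i) (hP i)
    refine ⟨?_, ?_, ?_⟩ <;> simp [count, hall]
  refine ⟨?_, ?_, ?_⟩
  · intro hp
    refine ⟨b, hab, ?_⟩
    intro l' hl'
    rcases l' with _ | _ | _
    · exact absurd rfl hl'
    · rw [← cin, ← cout]; exact hp Label.inn (by decide)
    · rw [← cund, ← cout]; exact hp Label.undec (by decide)
  · intro hp d hd
    by_cases hdb : d = b
    · subst hdb
      intro l' hl'
      rcases l' with _ | _ | _
      · rw [← cout, ← cin]; exact hp Label.out (by decide)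
      · exact absurd rfl hl'
      · rw [← cund, ← cin]; exact hp Label.undec (by decide)
    · obtain ⟨ho, hi, hu⟩ := cother d hdb hd
      have hn : 0 < n := by
        have h1 : count P a Label.out < count P a Label.inn := hp Label.out (by decide)
        have h2 : count P a Label.inn ≤ n := by
          simpa [count] using Finset.card_filter_le (Finset.univ : Finset (Fin n))
            (fun i => P i a = Label.inn)
        omega
      intro l' hl'
      rcases l' with _ | _ | _
      · omega
      · exact absurd rfl hl'
      · omega
  · intro hp
    constructor
    · refine ⟨b, hab, ?_⟩
      intro l' hl'
      rcases l' with _ | _ | _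
      · rw [← cout, ← cund]; exact hp Label.out (by decide)
      · rw [← cin, ← cund]; exact hp Label.inn (by decide)
      · exact absurd rfl hl'
    · rintro ⟨d, hd, hpd⟩
      by_cases hdb : d = b
      · subst hdb
        have h1 := hpd Label.undec (by decide)
        have h2 := hp Label.out (by decide)
        rw [← cund, ← cout] at h1
        omega
      · obtain ⟨ho, hi, hu⟩ := cother d hdb hd
        have := hpd Label.out (by decide)
        omega
end

section
/- Let AF be an argumentation framework such that each argument has at most one defeater b with undec ∈ JS(b) (i.e., at most one defeater that can be labelled undec by some complete labelling). Then the argument-wise plurality rule satisfies Collective Rationality on AF: on every profile of complete labellings for which it is defined, its output is a complete labelling. -/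
section Aux
variable {A : Type} (att : A → A → Prop)

noncomputable def Dfun : Set A →o Set A :=
  ⟨fun S => {a | ∀ b, att b a → ∃ c ∈ S, att c b},
   fun S T hST a ha b hb => by
      obtain ⟨c, hc, hcb⟩ := ha b hb
      exact ⟨c, hST hc, hcb⟩⟩

noncomputable def Gset : Set A := OrderHom.lfp (Dfun att)

variable {att}

lemma attackedByIn {L : A → Label} (hL : Complete att L) {b c : A}
    (h : att c b) (hc : L c = Label.inn) : L b = Label.out := by
  rcases hb : L b with _ | _ | _
  · have := hL.1 b hb c h
    rw [hc] at this; cases this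
  · rfl
  · exact absurd ⟨c, h, hc⟩ (hL.2.2 b hb).2

lemma allOutIn {L : A → Label} (hL : Complete att L) {a : A}
    (h : ∀ b, att b a → L b = Label.out) : L a = Label.inn := by
  rcases ha : L a with _ | _ | _
  · rfl
  · obtain ⟨b, hb, hbin⟩ := hL.2.1 a ha
    rw [h b hb] at hbin; cases hbin
  · obtain ⟨⟨b, hb, hbu⟩, -⟩ := hL.2.2 a ha
    rw [h b hb] at hbu; cases hbu

lemma G_subset_in {L : A → Label} (hL : Complete att L) :
    Gset att ⊆ {x | L x = Label.inn} := by
  apply OrderHom.lfp_le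
  intro a ha
  refine allOutIn hL (fun b hb => ?_)
  obtain ⟨c, hc, hcb⟩ := ha b hb
  exact attackedByIn hL hcb hc

lemma G_fixed : Dfun att (Gset att) = Gset att := OrderHom.map_lfp _

lemma G_cf (hex : ∃ L, Complete att L) {a c : A}
    (ha : a ∈ Gset att) (hc : c ∈ Gset att) (h : att c a) : False := by
  obtain ⟨L, hL⟩ := hex
  have h1 := G_subset_in hL ha
  have h2 := G_subset_in hL hc
  have := hL.1 a h1 c h
  rw [h2] at this; cases this

variable (att)

open Classical in
noncomputable def Lg : A → Label := fun a =>
  if a ∈ Gset att then Label.inn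
  else if ∃ c ∈ Gset att, att c a then Label.out else Label.undec

variable {att}

lemma Lg_eq_inn_iff {a : A} : Lg att a = Label.inn ↔ a ∈ Gset att := by
  unfold Lg; split_ifs <;> simp_all

lemma Lg_eq_out_iff {a : A} :
    Lg att a = Label.out ↔ a ∉ Gset att ∧ ∃ c ∈ Gset att, att c a := by
  unfold Lg; split_ifs <;> simp_all

lemma Lg_eq_undec_iff {a : A} :
    Lg att a = Label.undec ↔ a ∉ Gset att ∧ ¬ ∃ c ∈ Gset att, att c a := by
  unfold Lg; split_ifs <;> simp_all

lemma Lg_complete (hex : ∃ L, Complete att L) : Complete att (Lg att) := by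
  refine ⟨?_, ?_, ?_⟩
  · intro a ha b hb
    have haG : a ∈ Gset att := Lg_eq_inn_iff.mp ha
    have haD : a ∈ Dfun att (Gset att) := by rw [G_fixed]; exact haG
    obtain ⟨c, hc, hcb⟩ := haD b hb
    refine Lg_eq_out_iff.mpr ⟨fun hbG => G_cf hex hbG hc hcb, c, hc, hcb⟩
  · intro a ha
    obtain ⟨-, c, hc, hca⟩ := Lg_eq_out_iff.mp ha
    exact ⟨c, hca, Lg_eq_inn_iff.mpr hc⟩
  · intro a ha
    obtain ⟨haG, hnat⟩ := Lg_eq_undec_iff.mp ha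
    have haD : a ∉ Dfun att (Gset att) := by rw [G_fixed]; exact haG
    change ¬ (∀ b, att b a → ∃ c ∈ Gset att, att c b) at haD
    simp only [Dfun, OrderHom.coe_mk, Set.mem_setOf_eq, not_forall] at haD
    obtain ⟨b, hb, hbn⟩ := haD
    push_neg at hbn
    constructor
    · refine ⟨b, hb, Lg_eq_undec_iff.mpr ⟨fun hbG => hnat ⟨b, hbG, hb⟩, ?_⟩⟩
      rintro ⟨c, hc, hcb⟩; exact hbn c hc hcb
    · rintro ⟨c, hca, hcin⟩
      exact hnat ⟨c, Lg_eq_inn_iff.mp hcin, hca⟩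

lemma Lg_le_in {L : A → Label} (hL : Complete att L) {a : A}
    (h : Lg att a = Label.inn) : L a = Label.inn :=
  G_subset_in hL (Lg_eq_inn_iff.mp h)

lemma Lg_le_out {L : A → Label} (hL : Complete att L) {a : A}
    (h : Lg att a = Label.out) : L a = Label.out := by
  obtain ⟨-, c, hc, hca⟩ := Lg_eq_out_iff.mp h
  exact attackedByIn hL hca (G_subset_in hL hc)

end Aux

lemma lflip_flip (l : Label) : lflip (lflip l) = l := by cases l <;> rfl

/-- if each argument has at most one defeater that can be labelled
undec by some complete labelling, then the argument-wise plurality rule satisfies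
Collective Rationality. -/
theorem stmt18 {A : Type} [Fintype A] {n : ℕ} (att : A → A → Prop)
    (hlim : ∀ x b c, att b x → att c x →
      (∃ L, Complete att L ∧ L b = Label.undec) →
      (∃ L, Complete att L ∧ L c = Label.undec) → b = c)
    (P : Fin n → A → Label) (hcomp : ∀ i, Complete att (P i))
    (hdef : PluDefined P)
    (Lstar : A → Label) (hLstar : ∀ a, IsPlu P a (Lstar a)) :
    Complete att Lstar := by
  classical
  have plu_unique : ∀ (b : A) (l1 l2 : Label), IsPlu P b l1 → IsPlu P b l2 → l1 = l2 := by
    intro b l1 l2 h1 h2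
    by_contra hne
    exact absurd (h1 l2 fun h => hne h.symm) (not_lt.mpr (le_of_lt (h2 l1 hne)))
  have key : ∀ a : A,
      (Lstar a = Label.inn → ∀ b, att b a → Lstar b = Label.out) ∧
      (Lstar a = Label.out → ∃ b, att b a ∧ Lstar b = Label.inn) ∧
      (Lstar a = Label.undec →
        (∃ b, att b a ∧ Lstar b = Label.undec) ∧ ¬ ∃ b, att b a ∧ Lstar b = Label.inn) := by
    intro a
    obtain ⟨l', hl'⟩ : ∃ l', l' ≠ Lstar a := by
      rcases h : Lstar a with _ | _ | _
      · exact ⟨Label.out, by simp⟩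
      · exact ⟨Label.inn, by simp⟩
      · exact ⟨Label.inn, by simp⟩
    have hpos : 0 < count P a (Lstar a) := lt_of_le_of_lt (Nat.zero_le _) (hLstar a l' hl')
    obtain ⟨i0, -⟩ := Finset.card_pos.mp hpos
    have hex : ∃ L, Complete att L := ⟨P i0, hcomp i0⟩
    have allvote : ∀ (b : A) (l : Label), (∀ i, P i b = l) → Lstar b = l := by
      intro b l h
      refine plu_unique b _ _ (hLstar b) ?_
      intro l'' hne
      have h0 : count P b l'' = 0 := by
        simp only [count, Finset.card_eq_zero, Finset.filter_eq_empty_iff]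
        intro i _
        rw [h i]
        exact fun e => hne e.symm
      have hp : 0 < count P b l := Finset.card_pos.mpr ⟨i0, by simp [h i0]⟩
      omega
    have hvote_out : ∀ b, Lg att b = Label.out → ∀ i, P i b = Label.out :=
      fun b hb i => Lg_le_out (hcomp i) hb
    have hvote_in : ∀ b, Lg att b = Label.inn → ∀ i, P i b = Label.inn :=
      fun b hb i => Lg_le_in (hcomp i) hb
    by_cases hin : ∃ b, att b a ∧ Lg att b = Label.inn
    · obtain ⟨b, hba, hbin⟩ := hin
      have hva : ∀ i, P i a = Label.out :=
        fun i => attackedByIn (hcomp i) hba (hvote_in b hbin i)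
      have hsa : Lstar a = Label.out := allvote a _ hva
      refine ⟨?_, fun _ => ⟨b, hba, allvote b _ (hvote_in b hbin)⟩, ?_⟩
      · intro h; rw [hsa] at h; cases h
      · intro h; rw [hsa] at h; cases h
    · push_neg at hin
      by_cases hu : ∃ u, att u a ∧ Lg att u = Label.undec
      · obtain ⟨u, hua, huu⟩ := hu
        have hother : ∀ b, att b a → b ≠ u → Lg att b = Label.out := by
          intro b hba hbu
          rcases hb : Lg att b with _ | _ | _
          · exact absurd hb (hin b hba)
          · rfl
          · exact absurd (hlim a b u hba hua ⟨Lg att, Lg_complete hex, hb⟩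
              ⟨Lg att, Lg_complete hex, huu⟩) hbu
        have hvu : ∀ i, P i a = lflip (P i u) := by
          intro i
          rcases hiu : P i u with _ | _ | _
          · exact attackedByIn (hcomp i) hua hiu
          · refine allOutIn (hcomp i) ?_
            intro b hba
            by_cases hbu : b = u
            · rw [hbu]; exact hiu
            · exact hvote_out b (hother b hba hbu) i
          · rcases hia : P i a with _ | _ | _
            · have := (hcomp i).1 a hia u hua
              rw [hiu] at this; cases this
            · obtain ⟨c, hca, hcin⟩ := (hcomp i).2.1 a hia
              by_cases hcu : c = u
              · rw [hcu, hiu] at hcin; cases hcin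
              · rw [hvote_out c (hother c hca hcu) i] at hcin; cases hcin
            · rfl
        have hcount : ∀ l, count P a l = count P u (lflip l) := by
          intro l
          have heq : (Finset.univ.filter fun i => P i a = l)
              = (Finset.univ.filter fun i => P i u = lflip l) := by
            ext i
            simp only [Finset.mem_filter, Finset.mem_univ, true_and]
            rw [hvu i]
            constructor
            · intro h; rw [← h, lflip_flip]
            · intro h; rw [h, lflip_flip]
          rw [count, count, heq]
        have hplu : IsPlu P a (lflip (Lstar u)) := by
          intro l'' hne
          rw [hcount l'', hcount (lflip (Lstar u)), lflip_flip]
          apply hLstar u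
          intro h
          apply hne
          rw [← h, lflip_flip]
        have hsa : Lstar a = lflip (Lstar u) := plu_unique a _ _ (hLstar a) hplu
        have hothers : ∀ b, att b a → b ≠ u → Lstar b = Label.out :=
          fun b hba hbu => allvote b _ (hvote_out b (hother b hba hbu))
        rcases hsu : Lstar u with _ | _ | _
        · rw [hsu] at hsa; simp only [lflip] at hsa
          refine ⟨?_, fun _ => ⟨u, hua, hsu⟩, ?_⟩
          · intro h; rw [hsa] at h; cases h
          · intro h; rw [hsa] at h; cases h
        · rw [hsu] at hsa; simp only [lflip] at hsa
          refine ⟨fun _ b hba => ?_, ?_, ?_⟩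
          · by_cases hbu : b = u
            · rw [hbu, hsu]
            · exact hothers b hba hbu
          · intro h; rw [hsa] at h; cases h
          · intro h; rw [hsa] at h; cases h
        · rw [hsu] at hsa; simp only [lflip] at hsa
          refine ⟨?_, ?_, fun _ => ⟨⟨u, hua, hsu⟩, ?_⟩⟩
          · intro h; rw [hsa] at h; cases h
          · intro h; rw [hsa] at h; cases h
          · rintro ⟨b, hba, hbin⟩
            by_cases hbu : b = u
            · rw [hbu, hsu] at hbin; cases hbin
            · rw [hothers b hba hbu] at hbin; cases hbin
      · push_neg at hu
        have hallout : ∀ b, att b a → Lg att b = Label.out := by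
          intro b hba
          rcases hb : Lg att b with _ | _ | _
          · exact absurd hb (hin b hba)
          · rfl
          · exact absurd hb (hu b hba)
        have hva : ∀ i, P i a = Label.inn :=
          fun i => allOutIn (hcomp i) fun b hba => hvote_out b (hallout b hba) i
        have hsa : Lstar a = Label.inn := allvote a _ hva
        refine ⟨fun _ b hba => allvote b _ (hvote_out b (hallout b hba)), ?_, ?_⟩
        · intro h; rw [hsa] at h; cases h
        · intro h; rw [hsa] at h; cases h
  exact ⟨fun a => (key a).1, fun a => (key a).2.1, fun a => (key a).2.2⟩
end
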